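/- Let m ≥ 1 and B ≥ 1 be integers, let A be a finite set, and let s : A → ℕ satisfy s(a) ≥ 1 for all a ∈ A and Σ_{a∈A} s(a) = mB. Let X be a finite set of variables equipped with maps p : X → {1,…,m} and q : X → A such that every fiber p⁻¹(i) has exactly B elements and every fiber q⁻¹(a) has exactly s(a) elements. Define Boolean functions over X by S(α) = true iff α is constant on every fiber of p, and U(α) = true iff α is constant on every fiber of q. Then S isomorphically implies U if and only if there is a map c : A → {1,…,m} such that Σ_{a : c(a)=i} s(a) = B for every i ∈ {1,…,m}. -/

import Mathlib

/-- With `X` partitioned by `p : X → Fin m` into fibers of size `B` and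
by `q : X → A` into fibers of size `s a`, `S` = "constant on fibers of `p`" and
`U` = "constant on fibers of `q`": `S ⇒̃ U` iff `A` can be partitioned via
`c : A → Fin m` so that each part has total size `B`. -/
theorem stmt_10 (m B : ℕ) (hm : 1 ≤ m) (hB : 1 ≤ B)
    {A : Type*} [Fintype A] [DecidableEq A] (s : A → ℕ)
    (hs : ∀ a : A, 1 ≤ s a) (hsum : ∑ a : A, s a = m * B)
    {X : Type*} [Fintype X] [DecidableEq X] (p : X → Fin m) (q : X → A)
    (hp : ∀ i : Fin m, (Finset.univ.filter fun x => p x = i).card = B)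
    (hq : ∀ a : A, (Finset.univ.filter fun x => q x = a).card = s a)
    (S U : (X → Bool) → Bool)
    (hS : ∀ α : X → Bool, S α = true ↔ ∀ x x' : X, p x = p x' → α x = α x')
    (hU : ∀ α : X → Bool, U α = true ↔ ∀ x x' : X, q x = q x' → α x = α x') :
    (∃ π : Equiv.Perm X, ∀ α : X → Bool, S (α ∘ π) = true → U α = true) ↔
      (∃ c : A → Fin m, ∀ i : Fin m, ∑ a ∈ Finset.univ.filter fun a => c a = i, s a = B) := by
  constructor
  · rintro ⟨π, hπ⟩
    -- q-fibers refine (p ∘ π⁻¹)-fibers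
    have key : ∀ x x' : X, q x = q x' → p (π.symm x) = p (π.symm x') := by
      intro x x' hxx
      set j := p (π.symm x) with hj
      have hSα : S ((fun y => decide (p (π.symm y) = j)) ∘ π) = true := by
        rw [hS]
        intro y y' hyy
        simp [hyy]
      have hUα := (hU _).mp (hπ _ hSα) x x' hxx
      have : decide (p (π.symm x) = j) = true := by simp [hj]
      rw [this] at hUα
      exact (of_decide_eq_true hUα.symm).symm
    -- choose a representative in each q-fiber
    have hrep : ∀ a : A, ∃ x : X, q x = a := by
      intro a
      have : 0 < (Finset.univ.filter fun x => q x = a).card := by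
        rw [hq]; exact hs a
      obtain ⟨x, hx⟩ := Finset.card_pos.mp this
      exact ⟨x, (Finset.mem_filter.mp hx).2⟩
    choose rep hrepq using hrep
    refine ⟨fun a => p (π.symm (rep a)), fun i => ?_⟩
    have hcq : ∀ x : X, p (π.symm (rep (q x))) = p (π.symm x) :=
      fun x => key _ _ (hrepq (q x))
    have h1 : (Finset.univ.filter fun x => p (π.symm (rep (q x))) = i)
        = (Finset.univ.filter fun x => p (π.symm x) = i) := by
      ext x; simp [hcq x]
    have h2 : (Finset.univ.filter fun x => p (π.symm x) = i).card
        = (Finset.univ.filter fun x => p x = i).card := by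
      apply Finset.card_bij (fun x _ => π.symm x)
      · intro x hx; simpa using (Finset.mem_filter.mp hx).2
      · intro x _ x' _ h; exact π.symm.injective h
      · intro y hy
        refine ⟨π y, ?_, by simp⟩
        simpa using (Finset.mem_filter.mp hy).2
    have h3 : (Finset.univ.filter fun x => p (π.symm (rep (q x))) = i).card
        = ∑ a ∈ Finset.univ.filter fun a => p (π.symm (rep a)) = i,
            ((Finset.univ.filter fun x => p (π.symm (rep (q x))) = i).filter
              fun x => q x = a).card := by
      apply Finset.card_eq_sum_card_fiberwise
      intro x hx
      simp only [Finset.mem_coe, Finset.mem_filter, Finset.mem_univ, true_and] at hx ⊢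
      exact hx
    have h4 : ∀ a ∈ Finset.univ.filter fun a => p (π.symm (rep a)) = i,
        ((Finset.univ.filter fun x => p (π.symm (rep (q x))) = i).filter
          fun x => q x = a).card = s a := by
      intro a ha
      simp only [Finset.mem_filter, Finset.mem_univ, true_and] at ha
      rw [← hq a]
      congr 1
      ext x
      simp only [Finset.mem_filter, Finset.mem_univ, true_and]
      constructor
      · rintro ⟨_, h⟩; exact h
      · intro h; exact ⟨by rw [h, ha], h⟩
    calc ∑ a ∈ Finset.univ.filter fun a => p (π.symm (rep a)) = i, s a
        = ∑ a ∈ Finset.univ.filter fun a => p (π.symm (rep a)) = i,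
            ((Finset.univ.filter fun x => p (π.symm (rep (q x))) = i).filter
              fun x => q x = a).card := (Finset.sum_congr rfl h4).symm
      _ = (Finset.univ.filter fun x => p (π.symm (rep (q x))) = i).card := h3.symm
      _ = (Finset.univ.filter fun x => p x = i).card := by rw [h1, h2]
      _ = B := hp i
  · rintro ⟨c, hc⟩
    -- fiberwise bijections
    have hcard : ∀ i : Fin m,
        Fintype.card {x : X // c (q x) = i} = Fintype.card {x : X // p x = i} := by
      intro i
      rw [Fintype.card_subtype, Fintype.card_subtype, hp i]
      have h3 : (Finset.univ.filter fun x => c (q x) = i).card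
          = ∑ a ∈ Finset.univ.filter fun a => c a = i,
              ((Finset.univ.filter fun x => c (q x) = i).filter fun x => q x = a).card := by
        apply Finset.card_eq_sum_card_fiberwise
        intro x hx
        simp only [Finset.mem_coe, Finset.mem_filter, Finset.mem_univ, true_and] at hx ⊢
        exact hx
      rw [h3, ← hc i]
      apply Finset.sum_congr rfl
      intro a ha
      simp only [Finset.mem_filter, Finset.mem_univ, true_and] at ha
      rw [← hq a]
      congr 1
      ext x
      simp only [Finset.mem_filter, Finset.mem_univ, true_and]
      constructor
      · rintro ⟨_, h⟩; exact h
      · intro h; exact ⟨by rw [h, ha], h⟩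
    have e : ∀ i : Fin m, {x : X // c (q x) = i} ≃ {x : X // p x = i} :=
      fun i => Fintype.equivOfCardEq (hcard i)
    let σ : Equiv.Perm X :=
      ((Equiv.sigmaFiberEquiv fun x => c (q x)).symm.trans
        ((Equiv.sigmaCongrRight e).trans (Equiv.sigmaFiberEquiv p)))
    have hσ : ∀ x : X, p (σ x) = c (q x) := by
      intro x
      show p ((Equiv.sigmaFiberEquiv p) ((Equiv.sigmaCongrRight e)
        ((Equiv.sigmaFiberEquiv fun x => c (q x)).symm x))) = c (q x)
      simp only [Equiv.sigmaFiberEquiv, Equiv.coe_fn_mk, Equiv.coe_fn_symm_mk,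
        Equiv.sigmaCongrRight_apply, Sigma.map]
      exact (e (c (q x)) ⟨x, rfl⟩).2
    refine ⟨σ.symm, fun α hSα => ?_⟩
    rw [hS] at hSα
    rw [hU]
    intro x x' hxx
    have := hSα (σ x) (σ x') (by rw [hσ, hσ, hxx])
    simpa using this
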